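/- arXiv:1307.3343 — 3 statements merged into one kernel-verified Lean document; each statement's English description precedes it below -/
import Mathlib

section
/- For every \lambda in the unit disk with \lambda \ne 0, \left\|\left(\log(1-|\lambda|^2) + \frac{|\lambda|^2}{1-|\lambda|^2}\right) k_{\bar{\lambda}} + \lambda \log(1-|\lambda|^2)\, \widetilde{k}_{\bar{\lambda}}\right\|^2 = \frac{[\log(1-|\lambda|^2)]^2 + |\lambda|^2\log(1-|\lambda|^2)}{(1-|\lambda|^2)^2}, where the norm is the Dirichlet space norm. -/
open Complex Metric

/-- For `λ` in the unit disk with `λ ≠ 0`, the squared Dirichlet norm of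
`(log(1-|λ|²) + |λ|²/(1-|λ|²)) k_{conj λ} + λ log(1-|λ|²) k̃_{conj λ}`
(whose `n`-th Taylor coefficient is
`(log(1-|λ|²) + |λ|²/(1-|λ|²)) λⁿ/(n+1) + λ log(1-|λ|²) (n/(n+1)) λ^{n-1}`) equals
`([log(1-|λ|²)]² + |λ|² log(1-|λ|²))/(1-|λ|²)²`. -/
theorem stmt14 (l : ℂ) (hl : ‖l‖ < 1) (h0 : l ≠ 0) :
    ∑' n : ℕ, ((n : ℝ) + 1) *
        ‖((Real.log (1 - ‖l‖ ^ 2) + ‖l‖ ^ 2 / (1 - ‖l‖ ^ 2) : ℝ) : ℂ) * (l ^ n / ((n : ℂ) + 1)) +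
          l * ((Real.log (1 - ‖l‖ ^ 2) : ℝ) : ℂ) *
            (((n : ℂ) / ((n : ℂ) + 1)) * l ^ (n - 1))‖ ^ 2 =
      ((Real.log (1 - ‖l‖ ^ 2)) ^ 2 + ‖l‖ ^ 2 * Real.log (1 - ‖l‖ ^ 2)) /
        (1 - ‖l‖ ^ 2) ^ 2 := by
  set r : ℝ := ‖l‖ ^ 2 with hr_def
  have hr0 : 0 < r := by
    have hne : ‖l‖ ≠ 0 := norm_ne_zero_iff.mpr h0
    positivity
  have hr1 : r < 1 := by
    nlinarith [norm_nonneg l]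
  have hr1' : (0:ℝ) < 1 - r := by linarith
  set a : ℝ := Real.log (1 - r) with ha_def
  set b : ℝ := r / (1 - r) with hb_def
  have h1 : HasSum (fun n : ℕ => ((n : ℝ) + 1) * r ^ n) (1 / (1 - r) ^ 2) := by
    have hgeo : HasSum (fun n : ℕ => r ^ n) (1 - r)⁻¹ :=
      hasSum_geometric_of_lt_one hr0.le hr1
    have hn : HasSum (fun n : ℕ => (n : ℝ) * r ^ n) (r / (1 - r) ^ 2) :=
      hasSum_coe_mul_geometric_of_norm_lt_one
        (by rwa [Real.norm_eq_abs, _root_.abs_of_nonneg hr0.le])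
    have hadd := hn.add hgeo
    convert hadd using 1
    · funext n; ring
    · field_simp
      ring
  have h2 : HasSum (fun n : ℕ => r ^ n) (1 / (1 - r)) := by
    simpa [one_div] using hasSum_geometric_of_lt_one hr0.le hr1
  have h3 : HasSum (fun n : ℕ => r ^ n / ((n : ℝ) + 1)) (-a / r) := by
    have habs : |r| < 1 := by rwa [_root_.abs_of_nonneg hr0.le]
    have hd := (Real.hasSum_pow_div_log_of_abs_lt_one habs).div_const r
    have hfun : (fun n : ℕ => r ^ n / ((n : ℝ) + 1))
        = fun n : ℕ => r ^ (n + 1) / ((n : ℝ) + 1) / r := by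
      funext n
      rw [pow_succ]
      field_simp
    rw [hfun, ha_def]
    exact hd
  have key : HasSum
      (fun n : ℕ => a ^ 2 * (((n : ℝ) + 1) * r ^ n) + 2 * a * b * r ^ n
        + b ^ 2 * (r ^ n / ((n : ℝ) + 1)))
      (a ^ 2 * (1 / (1 - r) ^ 2) + 2 * a * b * (1 / (1 - r)) + b ^ 2 * (-a / r)) :=
    ((h1.mul_left _).add (h2.mul_left _)).add (h3.mul_left _)
  have hsummand : ∀ n : ℕ, ((n : ℝ) + 1) *
        ‖((a + b : ℝ) : ℂ) * (l ^ n / ((n : ℂ) + 1)) +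
          l * ((a : ℝ) : ℂ) * (((n : ℂ) / ((n : ℂ) + 1)) * l ^ (n - 1))‖ ^ 2 =
      a ^ 2 * (((n : ℝ) + 1) * r ^ n) + 2 * a * b * r ^ n
        + b ^ 2 * (r ^ n / ((n : ℝ) + 1)) := by
    intro n
    have hn1 : ((n : ℂ) + 1) ≠ 0 := Nat.cast_add_one_ne_zero n
    have hn1' : ((n : ℝ) + 1) ≠ 0 := by positivity
    have hpow : l * (((n : ℂ) / ((n : ℂ) + 1)) * l ^ (n - 1))
        = ((n : ℂ) / ((n : ℂ) + 1)) * l ^ n := by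
      cases n with
      | zero => simp
      | succ m =>
        rw [Nat.add_sub_cancel, pow_succ]
        ring
    have hc : ((a + b : ℝ) : ℂ) * (l ^ n / ((n : ℂ) + 1)) +
          l * ((a : ℝ) : ℂ) * (((n : ℂ) / ((n : ℂ) + 1)) * l ^ (n - 1))
        = (((a + b + a * n) / (n + 1) : ℝ) : ℂ) * l ^ n := by
      rw [show l * ((a : ℝ) : ℂ) * (((n : ℂ) / ((n : ℂ) + 1)) * l ^ (n - 1))
          = ((a : ℝ) : ℂ) * (l * (((n : ℂ) / ((n : ℂ) + 1)) * l ^ (n - 1))) by ring, hpow]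
      push_cast
      field_simp
    rw [hc, norm_mul, Complex.norm_real, norm_pow, mul_pow, ← pow_mul,
      Real.norm_eq_abs, _root_.sq_abs]
    have hpr : (‖l‖ ^ (n * 2)) = r ^ n := by rw [hr_def, ← pow_mul, mul_comm]
    rw [hpr]
    have hab : a + b + a * (n : ℝ) = a * ((n : ℝ) + 1) + b := by ring
    rw [hab]
    field_simp
    ring
  have hval : a ^ 2 * (1 / (1 - r) ^ 2) + 2 * a * b * (1 / (1 - r)) + b ^ 2 * (-a / r)
      = (a ^ 2 + r * a) / (1 - r) ^ 2 := by
    rw [hb_def]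
    field_simp
    ring
  rw [tsum_congr hsummand, key.tsum_eq, hval]
end

section
/- For \lambda in the unit disk with \lambda \ne 0, let R_\lambda: \mathcal{D} \to \mathcal{D} be the rank-one operator R_\lambda f = -\frac{f(\bar{\lambda})\,\bar{\lambda}}{[\log(1-|\lambda|^2)]^2}\left[\left(\log(1-|\lambda|^2) + \frac{|\lambda|^2}{1-|\lambda|^2}\right) k_{\bar{\lambda}} + \lambda\log(1-|\lambda|^2)\,\widetilde{k}_{\bar{\lambda}}\right] (this is the Wirtinger derivative \partial\Pi_1(\lambda)/\partial\lambda of the orthogonal projection \Pi_1(\lambda) onto the span of k_{\bar{\lambda}}). Then its operator norm, which coincides with its Hilbert-Schmidt norm since R_\lambda has rank one, satisfies \|R_\lambda\|^2 = -\frac{\log(1-|\lambda|^2) + |\lambda|^2}{[\log(1-|\lambda|^2)(1-|\lambda|^2)]^2}. -/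
open Complex Metric

noncomputable section

/-- The Dirichlet space, modelled as `ℓ²` via the orthonormal basis `zⁿ/√(n+1)`:
an element `g` corresponds to the analytic function with Taylor coefficients
`g n/√(n+1)`, i.e. `f(z) = ∑ (g n/√(n+1)) zⁿ`;  `evalD g z` is this value `f(z)`. -/
def evalD {E : Type*} [NormedAddCommGroup E] [InnerProductSpace ℂ E]
    (g : lp (fun _ : ℕ => E) 2) (z : ℂ) : E :=
  ∑' n : ℕ, (z ^ n / (Real.sqrt ((n : ℝ) + 1) : ℂ)) • g n

/-- The squared Hilbert-Schmidt norm of an operator, computed in a Hilbert basis `b`. -/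
def hsNormSq {H : Type*} [NormedAddCommGroup H] [InnerProductSpace ℂ H]
    {ι : Type*} (b : HilbertBasis ι ℂ H) (A : H →L[ℂ] H) : ℝ :=
  ∑' i, ‖A (b i)‖ ^ 2

lemma parseval_sq {H : Type*} [NormedAddCommGroup H] [InnerProductSpace ℂ H] {ι : Type*}
    (b : HilbertBasis ι ℂ H) (x : H) :
    HasSum (fun i => ‖(inner ℂ x (b i) : ℂ)‖ ^ 2) (‖x‖ ^ 2) := by
  have h := (b.hasSum_inner_mul_inner x x).mapL Complex.reCLM
  have h2 : ∀ i, Complex.reCLM ((inner ℂ x (b i) : ℂ) * inner ℂ (b i) x)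
      = ‖(inner ℂ x (b i) : ℂ)‖ ^ 2 := by
    intro i
    have hc : (inner ℂ (b i) x : ℂ) = (starRingEnd ℂ) (inner ℂ x (b i)) := (inner_conj_symm _ _).symm
    rw [hc, Complex.mul_conj']
    simp [← Complex.ofReal_pow]
  simp_rw [h2] at h
  have h3 : Complex.reCLM (inner ℂ x x : ℂ) = ‖x‖ ^ 2 := by
    simpa using (InnerProductSpace.norm_sq_eq_re_inner (𝕜 := ℂ) x).symm
  rwa [h3] at h

set_option maxHeartbeats 2000000 in
/-- For `λ` in the unit disk, `λ ≠ 0`, let `kv`, `ktv` be the elements of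
the Dirichlet space representing `k_{conj λ}` (Taylor coefficients `λⁿ/(n+1)`) and the
derived kernel `k̃_{conj λ}` (Taylor coefficients `(n/(n+1)) λ^{n-1}`), and let `R` be the
rank-one operator (the Wirtinger derivative `∂Π₁(λ)/∂λ` of the projection onto span
`k_{conj λ}`)
`R f = -(f(conj λ) conj λ/[log(1-|λ|²)]²)[(log(1-|λ|²)+|λ|²/(1-|λ|²)) k_{conj λ}
        + λ log(1-|λ|²) k̃_{conj λ}]`.
Then its operator norm squared equals `-(log(1-|λ|²)+|λ|²)/[log(1-|λ|²)(1-|λ|²)]²`, and its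
Hilbert-Schmidt norm coincides with its operator norm. -/
theorem stmt16 {ι : Type*} (b : HilbertBasis ι ℂ (lp (fun _ : ℕ => ℂ) 2))
    (l : ℂ) (hl : ‖l‖ < 1) (h0 : l ≠ 0)
    (kv ktv : lp (fun _ : ℕ => ℂ) 2)
    (hkv : ∀ n : ℕ, kv n = l ^ n / (Real.sqrt ((n : ℝ) + 1) : ℂ))
    (hktv : ∀ n : ℕ, ktv n = ((n : ℂ) / (Real.sqrt ((n : ℝ) + 1) : ℂ)) * l ^ (n - 1))
    (R : lp (fun _ : ℕ => ℂ) 2 →L[ℂ] lp (fun _ : ℕ => ℂ) 2)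
    (hR : ∀ f, R f =
      (-(evalD f (starRingEnd ℂ l)) * starRingEnd ℂ l /
          ((Real.log (1 - ‖l‖ ^ 2) : ℝ) : ℂ) ^ 2) •
        (((Real.log (1 - ‖l‖ ^ 2) + ‖l‖ ^ 2 / (1 - ‖l‖ ^ 2) : ℝ) : ℂ) • kv +
          (l * ((Real.log (1 - ‖l‖ ^ 2) : ℝ) : ℂ)) • ktv)) :
    ‖R‖ ^ 2 = -(Real.log (1 - ‖l‖ ^ 2) + ‖l‖ ^ 2) /
        (Real.log (1 - ‖l‖ ^ 2) * (1 - ‖l‖ ^ 2)) ^ 2 ∧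
      hsNormSq b R = ‖R‖ ^ 2 := by
  set r : ℝ := ‖l‖ ^ 2 with hrdef
  have hr0 : 0 < r := pow_pos (norm_pos_iff.mpr h0) 2
  have hr1 : r < 1 := by
    rw [hrdef]; nlinarith [norm_nonneg l]
  have ht : (0:ℝ) < 1 - r := by linarith
  set L : ℝ := Real.log (1 - r) with hLdef
  have hL : L < 0 := Real.log_neg (by linarith) (by linarith)
  have hLne : L ≠ 0 := ne_of_lt hL
  clear_value r L
  set A : ℝ := L + r / (1 - r) with hAdef
  clear_value A
  set w : lp (fun _ : ℕ => ℂ) 2 :=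
    ((-(starRingEnd ℂ l)) / ((L : ℂ)) ^ 2) •
      (((A : ℝ) : ℂ) • kv + (l * ((L : ℝ) : ℂ)) • ktv) with hwdef
  clear_value w
  -- evaluation is the inner product against kv
  have heval : ∀ f : lp (fun _ : ℕ => ℂ) 2, evalD f (starRingEnd ℂ l) = inner ℂ kv f := by
    intro f
    rw [lp.inner_eq_tsum]
    refine tsum_congr fun n => ?_
    rw [hkv n, RCLike.inner_apply, map_div₀, map_pow, Complex.conj_ofReal, smul_eq_mul, mul_comm]
  have hRw : ∀ f, R f = (inner ℂ kv f : ℂ) • w := by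
    intro f
    rw [hR f, ← heval f, hwdef, smul_smul]
    congr 1
    ring
  -- coordinate norms
  have hbase : ∀ n : ℕ, ‖l ^ n / (Real.sqrt ((n:ℝ)+1) : ℂ)‖ ^ 2 = r ^ n / ((n:ℝ)+1) := by
    intro n
    have h1 : (0:ℝ) ≤ (n:ℝ)+1 := by positivity
    rw [norm_div, norm_pow, Complex.norm_real, Real.norm_eq_abs,
      _root_.abs_of_nonneg (Real.sqrt_nonneg _), div_pow, Real.sq_sqrt h1, ← pow_mul, mul_comm n 2,
      pow_mul, hrdef]
  have hkvsq : ∀ n : ℕ, ‖kv n‖ ^ 2 = r ^ n / ((n:ℝ)+1) := fun n => by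
    rw [hkv n]; exact hbase n
  -- coordinates of w
  have hwcoord : ∀ n : ℕ, w n = ((-(starRingEnd ℂ l)) / ((L : ℂ)) ^ 2) *
      (((A : ℂ) + (n : ℂ) * (L : ℂ)) * (l ^ n / (Real.sqrt ((n:ℝ)+1) : ℂ))) := by
    intro n
    rw [hwdef]
    simp only [lp.coeFn_smul, Pi.smul_apply, lp.coeFn_add, Pi.add_apply, smul_eq_mul]
    rw [hkv n, hktv n]
    cases n with
    | zero => simp
    | succ m =>
      rw [Nat.add_sub_cancel]
      push_cast
      ring
  have hwsq : ∀ n : ℕ, ‖w n‖ ^ 2 = (r / L^4) * (((A + (n:ℝ)*L)^2) * (r ^ n / ((n:ℝ)+1))) := by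
    intro n
    have hc2 : ((A : ℂ) + (n : ℂ) * (L : ℂ)) = (((A + (n:ℝ)*L : ℝ)) : ℂ) := by push_cast; ring
    rw [hwcoord n, norm_mul, norm_mul, mul_pow, mul_pow, hbase n, hc2, Complex.norm_real,
      Real.norm_eq_abs, _root_.sq_abs]
    congr 1
    rw [norm_div, norm_neg, RCLike.norm_conj, norm_pow, Complex.norm_real, Real.norm_eq_abs,
      div_pow, ← hrdef, _root_.sq_abs, ← pow_mul]
  -- summation identities
  have habs : |r| < 1 := by rw [abs_of_pos hr0]; linarith
  have hsum1 : HasSum (fun n : ℕ => r ^ n / ((n:ℝ)+1)) (-L / r) := by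
    have h := (Real.hasSum_pow_div_log_of_abs_lt_one habs).div_const r
    rw [hLdef]
    convert h using 2 with n
    · rfl
    rw [pow_succ]
    field_simp
  have hsum2 : HasSum (fun n : ℕ => (n:ℝ) * r ^ n) (r / (1-r)^2) :=
    hasSum_coe_mul_geometric_of_norm_lt_one (by rwa [Real.norm_eq_abs])
  have hsum3 : HasSum (fun n : ℕ => r ^ n) ((1-r)⁻¹) :=
    hasSum_geometric_of_lt_one hr0.le (by linarith)
  set W : ℝ := (r / L^4) * ((A^2 - 2*A*L + L^2) * (-L/r) +
      ((2*A*L - L^2) * (1-r)⁻¹ + L^2 * (r/(1-r)^2))) with hWdef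
  have hW : HasSum (fun n : ℕ => (r / L^4) * (((A + (n:ℝ)*L)^2) * (r ^ n / ((n:ℝ)+1)))) W := by
    rw [hWdef]
    refine HasSum.mul_left _ ?_
    have h := (hsum1.mul_left (A^2 - 2*A*L + L^2)).add
      ((hsum3.mul_left (2*A*L - L^2)).add (hsum2.mul_left (L^2)))
    convert h using 2 with n
    have hn : ((n:ℝ)+1) ≠ 0 := by positivity
    field_simp
    ring
  -- norms of w and kv
  have h2w : HasSum (fun n => ‖w n‖ ^ 2) (‖w‖ ^ 2) := by
    simpa using lp.hasSum_norm (p := 2) (by norm_num) w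
  have hwnorm : ‖w‖ ^ 2 = W := by
    refine h2w.unique ?_
    simpa only [← hwsq] using hW
  have h2kv : HasSum (fun n => ‖kv n‖ ^ 2) (‖kv‖ ^ 2) := by
    simpa using lp.hasSum_norm (p := 2) (by norm_num) kv
  have hkvnorm : ‖kv‖ ^ 2 = -L / r := by
    refine h2kv.unique ?_
    simpa only [← hkvsq] using hsum1
  have hkvpos : 0 < ‖kv‖ := by
    have h1 : 0 < ‖kv‖ ^ 2 := by rw [hkvnorm]; exact div_pos (by linarith) hr0
    nlinarith [norm_nonneg kv]
  -- operator norm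
  have hRnorm : ‖R‖ = ‖kv‖ * ‖w‖ := by
    apply le_antisymm
    · refine R.opNorm_le_bound (by positivity) fun f => ?_
      rw [hRw f, norm_smul]
      calc ‖(inner ℂ kv f : ℂ)‖ * ‖w‖ ≤ (‖kv‖ * ‖f‖) * ‖w‖ := by
            gcongr; exact norm_inner_le_norm kv f
        _ = ‖kv‖ * ‖w‖ * ‖f‖ := by ring
    · have h1 := R.le_opNorm kv
      rw [hRw kv, norm_smul] at h1
      have h2 : ‖(inner ℂ kv kv : ℂ)‖ = ‖kv‖ ^ 2 := by
        rw [inner_self_eq_norm_sq_to_K, norm_pow, RCLike.norm_ofReal,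
          _root_.abs_of_nonneg (norm_nonneg kv)]
      rw [h2] at h1
      have h3 : (‖kv‖ * ‖w‖) * ‖kv‖ ≤ ‖R‖ * ‖kv‖ := by nlinarith [h1]
      exact le_of_mul_le_mul_right h3 hkvpos
  have hRsq : ‖R‖ ^ 2 = (-L/r) * W := by
    rw [hRnorm, mul_pow, hkvnorm, hwnorm]
  constructor
  · rw [hRsq, hWdef, hAdef]
    have hne : ((1:ℝ) - r) ≠ 0 := ne_of_gt ht
    field_simp
    ring
  · have hpar := parseval_sq b kv
    have hterm : ∀ i, ‖R (b i)‖ ^ 2 = ‖(inner ℂ kv (b i) : ℂ)‖ ^ 2 * ‖w‖ ^ 2 := by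
      intro i; rw [hRw, norm_smul, mul_pow]
    calc hsNormSq b R = ∑' i, ‖(inner ℂ kv (b i) : ℂ)‖ ^ 2 * ‖w‖ ^ 2 := tsum_congr hterm
      _ = ‖kv‖ ^ 2 * ‖w‖ ^ 2 := (hpar.mul_right _).tsum_eq
      _ = ‖R‖ ^ 2 := by rw [hRnorm, mul_pow]

end
end

section
/- For every \lambda in the unit disk with 0 < |\lambda| < 1, the normalized Laplacian of the logarithm of the squared norm of the Dirichlet reproducing kernel satisfies \Delta_\lambda \log\left(\frac{-\log(1-|\lambda|^2)}{|\lambda|^2}\right) = -\frac{\log(1-|\lambda|^2) + |\lambda|^2}{[\log(1-|\lambda|^2)]^2 (1-|\lambda|^2)^2}. -/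
open Complex Metric

noncomputable section

/-- The normalized Laplacian `Δ = (1/4)(∂²/∂x² + ∂²/∂y²)` of a function on `ℂ ≃ ℝ²`. -/
def lap (φ : ℂ → ℝ) (z : ℂ) : ℝ :=
  (4 : ℝ)⁻¹ * (fderiv ℝ (fun w => fderiv ℝ φ w 1) z 1 +
    fderiv ℝ (fun w => fderiv ℝ φ w Complex.I) z Complex.I)

namespace Stmt17Aux

/-- `A t = -log(1-t)`, positive for `t ∈ (0,1)`. -/
def A (t : ℝ) : ℝ := -Real.log (1 - t)

/-- First derivative of `t ↦ log(A t / t)`. -/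
def Fp (t : ℝ) : ℝ := ((1 - t) * A t)⁻¹ - t⁻¹

/-- Second derivative of `t ↦ log(A t / t)`. -/
def Fpp (t : ℝ) : ℝ := (A t - 1) / ((1 - t) * A t) ^ 2 + (t ^ 2)⁻¹

lemma hA {t : ℝ} (ht1 : t < 1) : HasDerivAt A ((1 - t)⁻¹) t := by
  have h : HasDerivAt (fun s : ℝ => 1 - s) (0 - 1) t :=
    (hasDerivAt_const t 1).sub (hasDerivAt_id t)
  have hlog := (Real.hasDerivAt_log (by linarith : (1:ℝ) - t ≠ 0)).comp t h
  have := hlog.neg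
  refine this.congr_deriv ?_
  ring

lemma hApos {t : ℝ} (ht0 : 0 < t) (ht1 : t < 1) : 0 < A t := by
  have := Real.log_neg (by linarith : (0:ℝ) < 1 - t) (by linarith : (1:ℝ) - t < 1)
  simp only [A]; linarith

lemma hFpderiv {t : ℝ} (ht0 : 0 < t) (ht1 : t < 1) : HasDerivAt Fp (Fpp t) t := by
  have hAp := hApos ht0 ht1
  have hmul : HasDerivAt (fun s : ℝ => (1 - s) * A s) ((0 - 1) * A t + (1 - t) * (1 - t)⁻¹) t :=
    ((hasDerivAt_const t 1).sub (hasDerivAt_id t)).mul (hA ht1)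
  have hinv := hmul.inv (ne_of_gt (mul_pos (by linarith) hAp))
  have h2 := hinv.sub (hasDerivAt_inv ht0.ne')
  refine h2.congr_deriv ?_
  have h1t : (1 : ℝ) - t ≠ 0 := by linarith
  unfold Fpp
  field_simp [Fpp]
  ring

lemma hFderiv {t : ℝ} (ht0 : 0 < t) (ht1 : t < 1) :
    HasDerivAt (fun s : ℝ => Real.log (-Real.log (1 - s) / s)) (Fp t) t := by
  have hAp := hApos ht0 ht1
  have hu : HasDerivAt (fun s : ℝ => A s / s) (((1 - t)⁻¹ * t - A t * 1) / t ^ 2) t :=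
    (hA ht1).div (hasDerivAt_id t) ht0.ne'
  have hupos : 0 < A t / t := div_pos hAp ht0
  have hlog := hu.log hupos.ne'
  simp only [A] at hlog
  convert hlog using 1
  have h1t : (1 : ℝ) - t ≠ 0 := by linarith
  have hL : Real.log (1 - t) ≠ 0 :=
    ne_of_lt (Real.log_neg (by linarith) (by linarith))
  unfold Fp A
  field_simp [Fp, A]
  ring

/-- The (real) Fréchet derivative of `z ↦ ‖z‖²`. -/
def DN (w : ℂ) : ℂ →L[ℝ] ℝ := (2 * w.re) • Complex.reCLM + (2 * w.im) • Complex.imCLM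

lemma hN (w : ℂ) : HasFDerivAt (fun z : ℂ => ‖z‖ ^ 2) (DN w) w := by
  have h : (fun z : ℂ => ‖z‖ ^ 2) = fun z : ℂ => z.re * z.re + z.im * z.im := by
    funext z
    rw [Complex.sq_norm, Complex.normSq_apply]
  rw [h]
  have hre : HasFDerivAt (fun z : ℂ => z.re) (Complex.reCLM : ℂ →L[ℝ] ℝ) w :=
    Complex.reCLM.hasFDerivAt
  have him : HasFDerivAt (fun z : ℂ => z.im) (Complex.imCLM : ℂ →L[ℝ] ℝ) w :=
    Complex.imCLM.hasFDerivAt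
  have h2 := (hre.mul hre).add (him.mul him)
  refine h2.congr_fderiv ?_
  refine ContinuousLinearMap.ext fun v => ?_
  simp [DN]
  ring

lemma hphi {w : ℂ} (h0 : w ≠ 0) (h1 : ‖w‖ < 1) :
    HasFDerivAt (fun z : ℂ => Real.log (-Real.log (1 - ‖z‖ ^ 2) / ‖z‖ ^ 2))
      (Fp (‖w‖ ^ 2) • DN w) w := by
  have ht0 : 0 < ‖w‖ ^ 2 := pow_pos (norm_pos_iff.mpr h0) 2
  have ht1 : ‖w‖ ^ 2 < 1 := pow_lt_one₀ (norm_nonneg w) h1 two_ne_zero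
  exact (hFderiv ht0 ht1).comp_hasFDerivAt w (hN w)

end Stmt17Aux

open Stmt17Aux in
/-- For `0 < |λ| < 1`, the normalized Laplacian of
`λ ↦ log(‖k_λ‖²) = log(-log(1-|λ|²)/|λ|²)` equals
`-(log(1-|λ|²)+|λ|²)/([log(1-|λ|²)]²(1-|λ|²)²)`. -/
theorem stmt17 (l : ℂ) (h0 : 0 < ‖l‖) (hl : ‖l‖ < 1) :
    lap (fun w : ℂ => Real.log (-Real.log (1 - ‖w‖ ^ 2) / ‖w‖ ^ 2)) l =
      -(Real.log (1 - ‖l‖ ^ 2) + ‖l‖ ^ 2) /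
        ((Real.log (1 - ‖l‖ ^ 2)) ^ 2 * (1 - ‖l‖ ^ 2) ^ 2) := by
  set φ : ℂ → ℝ := fun w : ℂ => Real.log (-Real.log (1 - ‖w‖ ^ 2) / ‖w‖ ^ 2) with hφ
  have hl0 : l ≠ 0 := norm_pos_iff.mp h0
  have ht0 : 0 < ‖l‖ ^ 2 := pow_pos h0 2
  have ht1 : ‖l‖ ^ 2 < 1 := pow_lt_one₀ (norm_nonneg l) hl two_ne_zero
  set t : ℝ := ‖l‖ ^ 2 with hts
  -- the open set where everything is smooth
  have hmem : {z : ℂ | ‖z‖ < 1} ∩ {(0 : ℂ)}ᶜ ∈ nhds l := by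
    refine IsOpen.mem_nhds ?_ ⟨hl, hl0⟩
    exact (isOpen_lt continuous_norm continuous_const).inter isOpen_compl_singleton
  -- first partials
  have hg1 : (fun w => fderiv ℝ φ w 1) =ᶠ[nhds l] fun w => Fp (‖w‖ ^ 2) * (2 * w.re) := by
    refine Filter.eventuallyEq_of_mem hmem fun w hw => ?_
    rw [hφ, (hphi hw.2 hw.1).fderiv]
    simp [DN]
  have hg2 : (fun w => fderiv ℝ φ w Complex.I) =ᶠ[nhds l] fun w => Fp (‖w‖ ^ 2) * (2 * w.im) := by
    refine Filter.eventuallyEq_of_mem hmem fun w hw => ?_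
    rw [hφ, (hphi hw.2 hw.1).fderiv]
    simp [DN]
  -- second partials
  have hFpN : HasFDerivAt (fun w : ℂ => Fp (‖w‖ ^ 2)) (Fpp t • DN l) l :=
    by exact (hFpderiv ht0 ht1).comp_hasFDerivAt l (hN l)
  have hre2 : HasFDerivAt (fun w : ℂ => 2 * w.re) ((2 : ℝ) • (Complex.reCLM : ℂ →L[ℝ] ℝ)) l :=
    Complex.reCLM.hasFDerivAt.const_mul 2
  have him2 : HasFDerivAt (fun w : ℂ => 2 * w.im) ((2 : ℝ) • (Complex.imCLM : ℂ →L[ℝ] ℝ)) l :=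
    Complex.imCLM.hasFDerivAt.const_mul 2
  have hd1 := hFpN.mul hre2
  have hd2 := hFpN.mul him2
  have e1 : fderiv ℝ (fun w => fderiv ℝ φ w 1) l 1 = 2 * Fp t + 4 * l.re ^ 2 * Fpp t := by
    rw [hg1.fderiv_eq, show (fun w : ℂ => Fp (‖w‖ ^ 2) * (2 * w.re)) = (fun w : ℂ => Fp (‖w‖ ^ 2)) * (fun w : ℂ => 2 * w.re) from rfl, hd1.fderiv]
    simp [DN]
    ring
  have e2 : fderiv ℝ (fun w => fderiv ℝ φ w Complex.I) l Complex.I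
      = 2 * Fp t + 4 * l.im ^ 2 * Fpp t := by
    rw [hg2.fderiv_eq, show (fun w : ℂ => Fp (‖w‖ ^ 2) * (2 * w.im)) = (fun w : ℂ => Fp (‖w‖ ^ 2)) * (fun w : ℂ => 2 * w.im) from rfl, hd2.fderiv]
    simp [DN]
    ring
  have hsq : l.re ^ 2 + l.im ^ 2 = t := by
    rw [hts, Complex.sq_norm, Complex.normSq_apply]; ring
  have hlap : lap φ l = Fp t + t * Fpp t := by
    rw [lap, e1, e2, ← hsq]; ring
  rw [hlap]
  have h1t : (1 : ℝ) - t ≠ 0 := by linarith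
  have hL : Real.log (1 - t) ≠ 0 :=
    ne_of_lt (Real.log_neg (by linarith) (by linarith))
  simp only [Fp, Fpp, A]
  field_simp
  ring

end
end
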